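/- Let η be the linear order of finitely supported functions ω → ω₁ ordered lexicographically, and let η + η denote two consecutive copies of η. Then η + η is order-isomorphic to η. -/

import Mathlib

open Cardinal

noncomputable section

/-- ω₁ as an ordinal. -/
abbrev om1 : Ordinal := (Cardinal.aleph 1).ord

/-- The countable ordinals, i.e. ordinals `< ω₁`, as a linearly ordered type. -/
abbrev O1 : Type 1 := {o : Ordinal // o < om1}

instance : Zero O1 := ⟨⟨0, by rw [Cardinal.lt_ord]; simpa using Cardinal.aleph_pos 1⟩⟩

/-- η : the finitely supported functions ω → ω₁, ordered lexicographically: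
`f < g` iff `f n < g n` at the least `n` where `f` and `g` differ. -/
abbrev Eta : Type 1 := Lex (ℕ →₀ O1)

lemma O1.zero_val : ((0 : O1) : Ordinal) = 0 := rfl

lemma one_lt_om1 : (1 : Ordinal) < om1 := by
  rw [Cardinal.lt_ord, Ordinal.card_one]
  exact one_lt_aleph0.trans_le (aleph0_le_aleph 1)

/-- Adding `1` (on the left) to an element of `O1`. -/
def addOne (a : O1) : O1 :=
  ⟨1 + a.1, Ordinal.isPrincipal_add_ord (aleph0_le_aleph 1) one_lt_om1 a.2⟩

lemma addOne_lt_addOne {a b : O1} (h : a < b) : addOne a < addOne b := by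
  simpa [addOne, Subtype.mk_lt_mk] using h

lemma zero_lt_addOne (a : O1) : (0 : O1) < addOne a :=
  Subtype.mk_lt_mk.2 (lt_of_lt_of_le zero_lt_one (le_self_add (a := (1:Ordinal)) (b := a.1)))

/-- Shift a finsupp one step to the right, putting `0` in slot `0`. -/
def shiftl (f : ℕ →₀ O1) : ℕ →₀ O1 :=
  Finsupp.embDomain ⟨Nat.succ, Nat.succ_injective⟩ f

lemma shiftl_zero (f : ℕ →₀ O1) : shiftl f 0 = 0 := by
  apply Finsupp.embDomain_notin_range
  simp [Function.Embedding.coeFn_mk]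

lemma shiftl_succ (f : ℕ →₀ O1) (n : ℕ) : shiftl f (n + 1) = f n :=
  Finsupp.embDomain_apply_self ⟨Nat.succ, Nat.succ_injective⟩ f n

lemma update_apply_same (f : ℕ →₀ O1) (v : O1) : f.update 0 v 0 = v := by
  simp

lemma update_apply_ne (f : ℕ →₀ O1) (v : O1) {n : ℕ} (h : n ≠ 0) :
    f.update 0 v n = f n := by
  rw [Finsupp.coe_update, Function.update_of_ne h]

/-- The map realizing `η + η ≃ η`. -/
def F (x : Eta ⊕ Eta) : Eta :=
  match x with
  | Sum.inl f => toLex (shiftl (ofLex f))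
  | Sum.inr f => toLex ((ofLex f).update 0 (addOne (ofLex f 0)))

def Fl (x : Lex (Eta ⊕ Eta)) : Eta := F (ofLex x)

lemma eta_lt_def {f g : Eta} :
    f < g ↔ ∃ j, (∀ d, d < j → ofLex f d = ofLex g d) ∧ ofLex f j < ofLex g j :=
  Finsupp.lex_def

lemma Fl_strictMono : StrictMono Fl := by
  have key : ∀ x y : Eta ⊕ Eta, toLex x < toLex y → Fl (toLex x) < Fl (toLex y) := ?_
  · intro a b h
    exact key (ofLex a) (ofLex b) h
  intro x y h
  cases x with
  | inl f =>
    cases y with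
    | inl g =>
      rw [Sum.Lex.inl_lt_inl_iff] at h
      obtain ⟨j, hj, hlt⟩ := eta_lt_def.1 h
      show F (Sum.inl f) < F (Sum.inl g)
      rw [eta_lt_def]
      refine ⟨j + 1, ?_, ?_⟩
      · intro d hd
        match d with
        | 0 => simp [F, shiftl_zero]
        | e + 1 =>
          have : e < j := by omega
          simpa [F, shiftl_succ] using hj e this
      · simpa [F, shiftl_succ] using hlt
    | inr g =>
      show F (Sum.inl f) < F (Sum.inr g)
      rw [eta_lt_def]
      refine ⟨0, fun d hd => absurd hd (Nat.not_lt_zero d), ?_⟩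
      show shiftl (ofLex f) 0 < (ofLex g).update 0 (addOne (ofLex g 0)) 0
      rw [shiftl_zero, update_apply_same]
      exact zero_lt_addOne _
  | inr f =>
    cases y with
    | inl g => exact absurd h Sum.Lex.not_inr_lt_inl
    | inr g =>
      rw [Sum.Lex.inr_lt_inr_iff] at h
      obtain ⟨j, hj, hlt⟩ := eta_lt_def.1 h
      show F (Sum.inr f) < F (Sum.inr g)
      rw [eta_lt_def]
      match j with
      | 0 =>
        refine ⟨0, fun d hd => absurd hd (Nat.not_lt_zero d), ?_⟩
        show (ofLex f).update 0 (addOne (ofLex f 0)) 0 <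
          (ofLex g).update 0 (addOne (ofLex g 0)) 0
        rw [update_apply_same, update_apply_same]
        exact addOne_lt_addOne hlt
      | e + 1 =>
        refine ⟨e + 1, ?_, ?_⟩
        · intro d hd
          match d with
          | 0 =>
            show (ofLex f).update 0 (addOne (ofLex f 0)) 0 =
              (ofLex g).update 0 (addOne (ofLex g 0)) 0
            rw [update_apply_same, update_apply_same, hj 0 (Nat.succ_pos e)]
          | k + 1 =>
            show (ofLex f).update 0 (addOne (ofLex f 0)) (k + 1) =
              (ofLex g).update 0 (addOne (ofLex g 0)) (k + 1)
            rw [update_apply_ne _ _ (Nat.succ_ne_zero k),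
              update_apply_ne _ _ (Nat.succ_ne_zero k)]
            exact hj (k + 1) hd
        · show (ofLex f).update 0 (addOne (ofLex f 0)) (e + 1) <
            (ofLex g).update 0 (addOne (ofLex g 0)) (e + 1)
          rw [update_apply_ne _ _ (Nat.succ_ne_zero e),
            update_apply_ne _ _ (Nat.succ_ne_zero e)]
          exact hlt

lemma Fl_surjective : Function.Surjective Fl := by
  intro g
  set g' : ℕ →₀ O1 := ofLex g with hg'
  by_cases h : g' 0 = 0
  · refine ⟨toLex (Sum.inl (toLex
      (Finsupp.comapDomain Nat.succ g' Nat.succ_injective.injOn))), ?_⟩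
    show F (Sum.inl (toLex (Finsupp.comapDomain Nat.succ g'
      Nat.succ_injective.injOn))) = g
    show toLex (shiftl (Finsupp.comapDomain Nat.succ g'
      Nat.succ_injective.injOn)) = toLex g'
    congr 1
    ext n
    match n with
    | 0 => rw [shiftl_zero, h]
    | m + 1 =>
      rw [shiftl_succ, Finsupp.comapDomain_apply]
  · have hval : (g' 0 : Ordinal) ≠ 0 := by
      intro h0
      exact h (Subtype.ext h0)
    set β : O1 := ⟨(g' 0 : Ordinal) - 1,
      lt_of_le_of_lt (Ordinal.sub_le_self _ _) (g' 0).2⟩ with hβ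
    have haddOne : addOne β = g' 0 := by
      apply Subtype.ext
      show 1 + ((g' 0 : Ordinal) - 1) = (g' 0 : Ordinal)
      exact Ordinal.add_sub_cancel_of_le (Ordinal.one_le_iff_ne_zero.2 hval)
    refine ⟨toLex (Sum.inr (toLex (g'.update 0 β))), ?_⟩
    show F (Sum.inr (toLex (g'.update 0 β))) = g
    show toLex ((g'.update 0 β).update 0
      (addOne ((g'.update 0 β) 0))) = toLex g'
    congr 1
    ext n
    match n with
    | 0 =>
      rw [update_apply_same, update_apply_same, haddOne]
    | m + 1 =>
      rw [update_apply_ne _ _ (Nat.succ_ne_zero m),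
        update_apply_ne _ _ (Nat.succ_ne_zero m)]

/-- `η + η` (two consecutive copies of η, the second on top of the first) is
order-isomorphic to `η`. -/
theorem eta_add_eta_orderIso :
    Nonempty (Lex (Eta ⊕ Eta) ≃o Eta) := by
  exact ⟨StrictMono.orderIsoOfSurjective Fl Fl_strictMono Fl_surjective⟩
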